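/- arXiv:hep-th/9212154 — 2 statements merged into one kernel-verified Lean document; each statement's English description precedes it below -/
import Mathlib

section
/- Let R be a finite-dimensional semisimple associative ℂ-algebra with basis {φ_i}, structure constants C_{ij}^k, nondegenerate metric g_{ij} = C_{ik}^l C_{jl}^k with inverse g^{ij}. Define η_i^j = C_{ik}^l C^{jk}_l (indices raised with g^{ij}). Then the linear map η : R → R given by η(φ_i) = η_i^j φ_j satisfies η ∘ η = η. -/
set_option linter.unusedSectionVars false

noncomputable section Stmt3Aux

variable {A ι : Type*} [Ring A] [Algebra ℂ A] [FiniteDimensional ℂ A]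
  [Fintype ι] [DecidableEq ι]

/-- The linear functional `a ↦ tr (L_a)`. -/
def Tfun : A →ₗ[ℂ] ℂ :=
  (LinearMap.trace ℂ A) ∘ₗ
    { toFun := fun a => LinearMap.mulLeft ℂ a
      map_add' := by intro x y; ext z; simp [add_mul]
      map_smul' := by intro c x; ext z; simp [smul_mul_assoc] }

lemma Tfun_apply (a : A) : Tfun a = LinearMap.trace ℂ A (LinearMap.mulLeft ℂ a) := rfl

lemma Tfun_comm (x y : A) : Tfun (x * y) = Tfun (y * x) := by
  simp only [Tfun_apply, LinearMap.mulLeft_mul]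
  exact LinearMap.trace_comp_comm' _ _

variable (b : Module.Basis ι ℂ A) (g ginv : Matrix ι ι ℂ)

lemma key_repr (hgT : ∀ i j, g i j = Tfun (b i * b j)) (y : A) (m : ι) :
    Tfun (y * b m) = ∑ k, b.repr y k * g k m := by
  conv_lhs => rw [← b.sum_repr y]
  rw [Finset.sum_mul]
  simp only [smul_mul_assoc, map_sum, map_smul, smul_eq_mul]
  exact Finset.sum_congr rfl fun k _ => by rw [hgT]

lemma repr_eq (hgT : ∀ i j, g i j = Tfun (b i * b j)) (hinv : g * ginv = 1)
    (y : A) (j : ι) :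
    b.repr y j = ∑ m, Tfun (y * b m) * ginv m j := by
  simp only [key_repr b g hgT y, Finset.sum_mul]
  rw [Finset.sum_comm]
  have h1 : ∀ k, ∑ m, b.repr y k * g k m * ginv m j
      = b.repr y k * (1 : Matrix ι ι ℂ) k j := by
    intro k
    rw [← hinv, Matrix.mul_apply, Finset.mul_sum]
    exact Finset.sum_congr rfl fun m _ => (mul_assoc _ _ _)
  rw [Finset.sum_congr rfl fun k _ => h1 k]
  simp [Matrix.one_apply, mul_ite]

lemma nondeg (hgT : ∀ i j, g i j = Tfun (b i * b j)) (hinv : g * ginv = 1)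
    (c : A) (h : ∀ m, Tfun (c * b m) = 0) : c = 0 := by
  have hr : ∀ j, b.repr c j = 0 := by
    intro j
    rw [repr_eq b g ginv hgT hinv]
    simp [h]
  apply b.repr.injective
  ext j
  simp [hr j]

lemma gsym (hgT : ∀ i j, g i j = Tfun (b i * b j)) (i j : ι) : g i j = g j i := by
  rw [hgT, hgT, Tfun_comm]

lemma ginvsym (hgT : ∀ i j, g i j = Tfun (b i * b j)) (hinv : g * ginv = 1)
    (hinv' : ginv * g = 1) (i j : ι) : ginv i j = ginv j i := by
  have hgt : g.transpose = g := Matrix.ext fun i j => gsym b g hgT j i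
  have h1 : ginv.transpose * g = 1 := by
    rw [← hgt, ← Matrix.transpose_mul, hinv, Matrix.transpose_one]
  have h2 : ginv.transpose = ginv := by
    calc ginv.transpose = ginv.transpose * (g * ginv) := by rw [hinv, Matrix.mul_one]
    _ = (ginv.transpose * g) * ginv := by rw [Matrix.mul_assoc]
    _ = ginv := by rw [h1, Matrix.one_mul]
  exact ((Matrix.transpose_apply ginv i j).symm.trans (congrFun (congrFun h2 i) j)).symm

lemma trace_formula (hgT : ∀ i j, g i j = Tfun (b i * b j)) (hinv : g * ginv = 1)
    (a : A) : Tfun a = ∑ i, ∑ m, Tfun (a * b i * b m) * ginv m i := by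
  rw [Tfun_apply, LinearMap.trace_eq_matrix_trace ℂ b, Matrix.trace]
  simp only [Matrix.diag, LinearMap.toMatrix_apply, LinearMap.mulLeft_apply]
  exact Finset.sum_congr rfl fun i _ => repr_eq b g ginv hgT hinv (a * b i) i

lemma z_eq_one (hgT : ∀ i j, g i j = Tfun (b i * b j)) (hinv : g * ginv = 1)
    (hinv' : ginv * g = 1) :
    (∑ k, ∑ l, ginv k l • (b k * b l)) = 1 := by
  have key : ∀ m, Tfun ((∑ k, ∑ l, ginv k l • (b k * b l)) * b m) = Tfun (b m) := by
    intro m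
    have h1 : ((∑ k, ∑ l, ginv k l • (b k * b l)) * b m)
        = ∑ k, ∑ l, ginv k l • (b k * b l * b m) := by
      rw [Finset.sum_mul]
      exact Finset.sum_congr rfl fun k _ => by
        rw [Finset.sum_mul]; exact Finset.sum_congr rfl fun l _ => smul_mul_assoc _ _ _
    rw [h1]
    simp only [map_sum, map_smul, smul_eq_mul]
    rw [trace_formula b g ginv hgT hinv (b m)]
    refine Finset.sum_congr rfl fun k _ => Finset.sum_congr rfl fun l _ => ?_
    have hc : Tfun (b k * b l * b m) = Tfun (b m * b k * b l) := by
      rw [Tfun_comm, ← mul_assoc]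
    rw [hc, ginvsym b g ginv hgT hinv hinv' k l, mul_comm]
  have h0 : ∀ m, Tfun (((∑ k, ∑ l, ginv k l • (b k * b l)) - 1) * b m) = 0 := by
    intro m
    rw [sub_mul, one_mul, map_sub, key m, sub_self]
  have := nondeg b g ginv hgT hinv _ h0
  exact sub_eq_zero.mp this

lemma central (hgT : ∀ i j, g i j = Tfun (b i * b j)) (hinv : g * ginv = 1)
    (hinv' : ginv * g = 1) (a x : A) :
    a * (∑ i, ∑ j, ginv i j • (b i * x * b j))
      = (∑ i, ∑ j, ginv i j • (b i * x * b j)) * a := by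
  have hmul : ∀ (y w : A), y * w = ∑ K, b.repr y K • (b K * w) := by
    intro y w
    conv_lhs => rw [← b.sum_repr y]
    rw [Finset.sum_mul]
    simp [smul_mul_assoc]
  have hmul2 : ∀ (v w : A) (i : ι), b i * (v * w) = ∑ L, b.repr w L • (b i * (v * b L)) := by
    intro v w i
    conv_lhs => rw [← b.sum_repr w]
    simp only [Finset.mul_sum, mul_smul_comm]
  have hL : a * (∑ i, ∑ j, ginv i j • (b i * x * b j))
      = ∑ q : ι × ι × ι × ι,
        (ginv q.1 q.2.1 * (Tfun (a * b q.1 * b q.2.2.2) * ginv q.2.2.2 q.2.2.1))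
          • (b q.2.2.1 * (x * b q.2.1)) := by
    simp only [Fintype.sum_prod_type]
    rw [Finset.mul_sum]
    refine Finset.sum_congr rfl fun i _ => ?_
    rw [Finset.mul_sum]
    refine Finset.sum_congr rfl fun j _ => ?_
    rw [mul_smul_comm]
    have h2 : a * (b i * x * b j) = (a * b i) * (x * b j) := by
      simp only [mul_assoc]
    rw [h2, hmul (a * b i) (x * b j), Finset.smul_sum]
    refine Finset.sum_congr rfl fun K _ => ?_
    rw [smul_smul, repr_eq b g ginv hgT hinv (a * b i) K, Finset.mul_sum, Finset.sum_smul]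
  have hR : (∑ i, ∑ j, ginv i j • (b i * x * b j)) * a
      = ∑ q : ι × ι × ι × ι,
        (ginv q.1 q.2.1 * (Tfun (b q.2.1 * a * b q.2.2.2) * ginv q.2.2.2 q.2.2.1))
          • (b q.1 * (x * b q.2.2.1)) := by
    simp only [Fintype.sum_prod_type]
    rw [Finset.sum_mul]
    refine Finset.sum_congr rfl fun i _ => ?_
    rw [Finset.sum_mul]
    refine Finset.sum_congr rfl fun j _ => ?_
    rw [smul_mul_assoc]
    have h2 : (b i * x * b j) * a = b i * (x * (b j * a)) := by
      simp only [mul_assoc]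
    rw [h2, hmul2 x (b j * a) i, Finset.smul_sum]
    refine Finset.sum_congr rfl fun L _ => ?_
    rw [smul_smul, repr_eq b g ginv hgT hinv (b j * a) L, Finset.mul_sum, Finset.sum_smul]
  rw [hL, hR]
  refine Fintype.sum_equiv
    ⟨fun q => (q.2.2.1, q.2.2.2, q.2.1, q.1), fun q => (q.2.2.2, q.2.2.1, q.1, q.2.1),
      fun q => rfl, fun q => rfl⟩ _ _ ?_
  rintro ⟨i, j, K, m⟩
  show (ginv i j * (Tfun (a * b i * b m) * ginv m K)) • (b K * (x * b j))
      = (ginv K m * (Tfun (b m * a * b i) * ginv i j)) • (b K * (x * b j))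
  have hT : Tfun (b m * a * b i) = Tfun (a * b i * b m) := by
    rw [Tfun_comm, ← mul_assoc, Tfun_comm, ← mul_assoc]
  rw [hT, ginvsym b g ginv hgT hinv hinv' K m]
  congr 1
  ring

end Stmt3Aux



/-- For a finite-dimensional semisimple associative ℂ-algebra with basis
`b`, metric `g i j = tr(L_{b i} ∘ L_{b j})` with inverse `ginv`, the map
`η x = ∑ i j, ginv i j • (b i * x * b j)` (the two-holed-sphere projector, whose matrix
in the basis is `η_i^j = C_{ik}^l C^{jk}_l`) is idempotent: η ∘ η = η. -/
theorem stmt3 {A ι : Type*} [Ring A] [Algebra ℂ A] [FiniteDimensional ℂ A]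
    [IsSemisimpleRing A] [Fintype ι] [DecidableEq ι]
    (b : Module.Basis ι ℂ A) (g ginv : Matrix ι ι ℂ)
    (hg : ∀ i j, g i j =
      LinearMap.trace ℂ A (LinearMap.mulLeft ℂ (b i) ∘ₗ LinearMap.mulLeft ℂ (b j)))
    (hinv : g * ginv = 1) (hinv' : ginv * g = 1)
    (η : A → A) (hη : ∀ x, η x = ∑ i, ∑ j, ginv i j • (b i * x * b j)) :
    ∀ x, η (η x) = η x := by

  intro x
  have hgT : ∀ i j, g i j = Tfun (b i * b j) := by
    intro i j
    rw [hg, Tfun_apply, LinearMap.mulLeft_mul]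
  set S := ∑ i, ∑ j, ginv i j • (b i * x * b j) with hS
  have hx : η x = S := hη x
  rw [hη (η x), hx]
  have hcomm : ∀ k : ι, b k * S = S * b k := fun k => central b g ginv hgT hinv hinv' (b k) x
  have step : ∀ k l : ι, b k * S * b l = S * (b k * b l) := by
    intro k l
    rw [hcomm k, mul_assoc]
  calc ∑ k, ∑ l, ginv k l • (b k * S * b l)
      = ∑ k, ∑ l, ginv k l • (S * (b k * b l)) := by
        refine Finset.sum_congr rfl fun k _ => Finset.sum_congr rfl fun l _ => ?_
        rw [step]
    _ = S * ∑ k, ∑ l, ginv k l • (b k * b l) := by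
        simp only [Finset.mul_sum, mul_smul_comm]
    _ = S := by rw [z_eq_one b g ginv hgT hinv hinv', mul_one]
end

section
/- Let R be a finite-dimensional semisimple associative ℂ-algebra with basis {φ_i}, structure constants C_{ijk} = tr(L_{φ_i} L_{φ_j} L_{φ_k}), and central projector η as above. Then the projected three-point function N_{ijk} = η_i^{i'} η_j^{j'} η_k^{k'} C_{i'j'k'} is totally symmetric in i, j, k (even though C_{ijk} is in general only cyclically symmetric). -/
section aux

variable {A : Type*} [Ring A] [Algebra ℂ A]

private lemma aux_mulLeft_sum {ι : Type*} [Fintype ι] (c : ι → ℂ) (v : ι → A) :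
    LinearMap.mulLeft ℂ (∑ m, c m • v m) = ∑ m, c m • LinearMap.mulLeft ℂ (v m) := by
  show LinearMap.mul ℂ A (∑ m, c m • v m) = _
  rw [map_sum]
  exact Finset.sum_congr rfl fun m _ => by rw [map_smul]; rfl

private lemma aux_expL {ι : Type*} [Fintype ι] (c : ι → ℂ) (v : ι → A)
    (G : Module.End ℂ A) :
    LinearMap.trace ℂ A (LinearMap.mulLeft ℂ (∑ m, c m • v m) * G) =
      ∑ m, c m * LinearMap.trace ℂ A (LinearMap.mulLeft ℂ (v m) * G) := by
  rw [aux_mulLeft_sum, Finset.sum_mul, map_sum]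
  exact Finset.sum_congr rfl fun m _ => by rw [smul_mul_assoc, map_smul, smul_eq_mul]

private lemma aux_expR {ι : Type*} [Fintype ι] (F : Module.End ℂ A) (c : ι → ℂ) (v : ι → A) :
    LinearMap.trace ℂ A (F * LinearMap.mulLeft ℂ (∑ m, c m • v m)) =
      ∑ m, c m * LinearMap.trace ℂ A (F * LinearMap.mulLeft ℂ (v m)) := by
  rw [aux_mulLeft_sum, Finset.mul_sum, map_sum]
  exact Finset.sum_congr rfl fun m _ => by rw [mul_smul_comm, map_smul, smul_eq_mul]

private lemma aux_expM {ι : Type*} [Fintype ι] (F G : Module.End ℂ A) (c : ι → ℂ) (v : ι → A) :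
    LinearMap.trace ℂ A (F * LinearMap.mulLeft ℂ (∑ m, c m • v m) * G) =
      ∑ m, c m * LinearMap.trace ℂ A (F * LinearMap.mulLeft ℂ (v m) * G) := by
  rw [aux_mulLeft_sum, Finset.mul_sum, Finset.sum_mul, map_sum]
  exact Finset.sum_congr rfl fun m _ => by
    rw [mul_smul_comm, smul_mul_assoc, map_smul, smul_eq_mul]

end aux


/-- With `C i j k = tr(L_{b i} L_{b j} L_{b k})` and `ηm` the matrix of the
central projector `η x = ∑ ginv i j • (b i * x * b j)` in the basis `b`, the projected
three-point function `N i j k = ∑ η_i^{i'} η_j^{j'} η_k^{k'} C_{i'j'k'}` is totally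
symmetric in `i, j, k`. -/
theorem stmt6 {A ι : Type*} [Ring A] [Algebra ℂ A] [FiniteDimensional ℂ A]
    [IsSemisimpleRing A] [Fintype ι] [DecidableEq ι]
    (b : Module.Basis ι ℂ A) (g ginv : Matrix ι ι ℂ)
    (hg : ∀ i j, g i j =
      LinearMap.trace ℂ A (LinearMap.mulLeft ℂ (b i) ∘ₗ LinearMap.mulLeft ℂ (b j)))
    (hinv : g * ginv = 1) (hinv' : ginv * g = 1)
    (C : ι → ι → ι → ℂ)
    (hC : ∀ i j k, C i j k = LinearMap.trace ℂ A
      (LinearMap.mulLeft ℂ (b i) ∘ₗ LinearMap.mulLeft ℂ (b j) ∘ₗ LinearMap.mulLeft ℂ (b k)))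
    (ηm : Matrix ι ι ℂ)
    (hηm : ∀ i j, ηm i j = b.repr (∑ p, ∑ q, ginv p q • (b p * b i * b q)) j)
    (N : ι → ι → ι → ℂ)
    (hN : ∀ i j k, N i j k = ∑ i', ∑ j', ∑ k', ηm i i' * ηm j j' * ηm k k' * C i' j' k') :
    ∀ i j k, N i j k = N j i k ∧ N i j k = N i k j := by
  classical
  have hg' : ∀ i j, g i j =
      LinearMap.trace ℂ A (LinearMap.mulLeft ℂ (b i) * LinearMap.mulLeft ℂ (b j)) := hg
  have hC' : ∀ i j k, C i j k = LinearMap.trace ℂ A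
      (LinearMap.mulLeft ℂ (b i) * LinearMap.mulLeft ℂ (b j) * LinearMap.mulLeft ℂ (b k)) :=
    hC
  -- symmetry of g
  have gsymm : ∀ i j, g i j = g j i := by
    intro i j
    rw [hg' i j, hg' j i]
    exact LinearMap.trace_mul_comm ℂ _ _
  have gT : g.transpose = g := Matrix.ext fun i j => gsymm j i
  -- the projector
  set η : A → A := fun x => ∑ p, ∑ q, ginv p q • (b p * x * b q) with hη
  -- coordinate matrices of left/right multiplication by a
  set Am : A → Matrix ι ι ℂ := fun a p m => b.repr (a * b p) m with hAm
  set Bm : A → Matrix ι ι ℂ := fun a q m => b.repr (b q * a) m with hBm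
  -- associativity of the trace form
  have hAB : ∀ a : A, Am a * g = g * (Bm a).transpose := by
    intro a
    ext p q
    rw [Matrix.mul_apply, Matrix.mul_apply]
    have lhs : ∑ m, Am a p m * g m q =
        LinearMap.trace ℂ A (LinearMap.mulLeft ℂ (a * b p) * LinearMap.mulLeft ℂ (b q)) := by
      conv_rhs => rw [← b.sum_repr (a * b p)]
      rw [aux_expL (fun m => b.repr (a * b p) m) (fun m => b m) (LinearMap.mulLeft ℂ (b q))]
      exact (Finset.sum_congr rfl fun m _ => by rw [hg' m q]).symm
    have mid : LinearMap.trace ℂ A (LinearMap.mulLeft ℂ (a * b p) * LinearMap.mulLeft ℂ (b q))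
        = LinearMap.trace ℂ A (LinearMap.mulLeft ℂ (b p) * LinearMap.mulLeft ℂ (b q * a)) := by
      simp only [LinearMap.mulLeft_mul]
      rw [← Module.End.mul_eq_comp, ← Module.End.mul_eq_comp, mul_assoc]
      rw [LinearMap.trace_mul_comm ℂ (LinearMap.mulLeft ℂ a) _, ← mul_assoc, mul_assoc]
    have rhs : LinearMap.trace ℂ A (LinearMap.mulLeft ℂ (b p) * LinearMap.mulLeft ℂ (b q * a))
        = ∑ m, g p m * (Bm a).transpose m q := by
      conv_lhs => rw [← b.sum_repr (b q * a)]
      rw [aux_expR (LinearMap.mulLeft ℂ (b p)) (fun m => b.repr (b q * a) m) (fun m => b m)]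
      exact Finset.sum_congr rfl fun m _ => by
        rw [Matrix.transpose_apply, hg' p m, mul_comm]
    rw [lhs, mid, rhs]
  -- key matrix identity
  have hkey : ∀ a : A, (Am a).transpose * ginv = ginv * Bm a := by
    intro a
    have h1 : g * (Am a).transpose = Bm a * g := by
      have h := congrArg Matrix.transpose (hAB a)
      rwa [Matrix.transpose_mul, Matrix.transpose_mul, Matrix.transpose_transpose, gT] at h
    have h2 : (Am a).transpose = ginv * Bm a * g := by
      calc (Am a).transpose = ginv * g * (Am a).transpose := by rw [hinv', one_mul]
        _ = ginv * (g * (Am a).transpose) := by rw [mul_assoc]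
        _ = ginv * (Bm a * g) := by rw [h1]
        _ = ginv * Bm a * g := by rw [mul_assoc]
    calc (Am a).transpose * ginv = ginv * Bm a * g * ginv := by rw [h2]
      _ = ginv * Bm a * (g * ginv) := by rw [mul_assoc]
      _ = ginv * Bm a := by rw [hinv, mul_one]
  -- centrality of η x
  have central : ∀ a x : A, a * η x = η x * a := by
    intro a x
    have lhs : a * η x = ∑ m, ∑ q, ((Am a).transpose * ginv) m q • (b m * x * b q) := by
      calc a * η x = ∑ p, ∑ q, ∑ m, (Am a p m * ginv p q) • (b m * x * b q) := by
            rw [hη]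
            simp only [Finset.mul_sum]
            refine Finset.sum_congr rfl fun p _ => Finset.sum_congr rfl fun q _ => ?_
            rw [mul_smul_comm]
            have h1 : a * (b p * x * b q) = (a * b p) * (x * b q) := by
              simp only [mul_assoc]
            rw [h1, ← b.sum_repr (a * b p), Finset.sum_mul, Finset.smul_sum]
            refine Finset.sum_congr rfl fun m _ => ?_
            rw [smul_mul_assoc, smul_smul, mul_comm (ginv p q), mul_assoc]
        _ = ∑ p, ∑ m, ∑ q, (Am a p m * ginv p q) • (b m * x * b q) :=
            Finset.sum_congr rfl fun p _ => Finset.sum_comm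
        _ = ∑ m, ∑ p, ∑ q, (Am a p m * ginv p q) • (b m * x * b q) := Finset.sum_comm
        _ = ∑ m, ∑ q, ∑ p, (Am a p m * ginv p q) • (b m * x * b q) :=
            Finset.sum_congr rfl fun m _ => Finset.sum_comm
        _ = ∑ m, ∑ q, ((Am a).transpose * ginv) m q • (b m * x * b q) := by
            refine Finset.sum_congr rfl fun m _ => Finset.sum_congr rfl fun q _ => ?_
            rw [Matrix.mul_apply, Finset.sum_smul]
            exact Finset.sum_congr rfl fun p _ => by rw [Matrix.transpose_apply]
    have rhs : η x * a = ∑ p, ∑ m, (ginv * Bm a) p m • (b p * x * b m) := by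
      calc η x * a = ∑ p, ∑ q, ∑ m, (ginv p q * Bm a q m) • (b p * x * b m) := by
            rw [hη]
            simp only [Finset.sum_mul]
            refine Finset.sum_congr rfl fun p _ => Finset.sum_congr rfl fun q _ => ?_
            rw [smul_mul_assoc]
            have h1 : (b p * x * b q) * a = (b p * x) * (b q * a) := by
              simp only [mul_assoc]
            rw [h1, ← b.sum_repr (b q * a), Finset.mul_sum, Finset.smul_sum]
            refine Finset.sum_congr rfl fun m _ => ?_
            rw [mul_smul_comm, smul_smul]
        _ = ∑ p, ∑ m, (ginv * Bm a) p m • (b p * x * b m) := by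
            refine Finset.sum_congr rfl fun p _ => ?_
            rw [Finset.sum_comm]
            refine Finset.sum_congr rfl fun m _ => ?_
            rw [Matrix.mul_apply, Finset.sum_smul]
    rw [lhs, rhs, hkey a]
  -- η (b i) in coordinates
  have hrepr : ∀ i, η (b i) = ∑ i', ηm i i' • b i' := by
    intro i
    conv_lhs => rw [← b.sum_repr (η (b i))]
    exact Finset.sum_congr rfl fun j _ => by rw [hηm i j]
  -- N as a trace of the projected elements
  have hNT : ∀ i j k, N i j k = LinearMap.trace ℂ A
      (LinearMap.mulLeft ℂ (η (b i)) * LinearMap.mulLeft ℂ (η (b j)) *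
        LinearMap.mulLeft ℂ (η (b k))) := by
    intro i j k
    rw [hN i j k]
    conv_rhs => rw [hrepr i, hrepr j, hrepr k]
    rw [mul_assoc, aux_expL (fun i' => ηm i i') (fun i' => b i')]
    refine Finset.sum_congr rfl fun i' _ => ?_
    have inner : LinearMap.trace ℂ A (LinearMap.mulLeft ℂ (b i') *
        (LinearMap.mulLeft ℂ (∑ j', ηm j j' • b j') *
          LinearMap.mulLeft ℂ (∑ k', ηm k k' • b k'))) =
        ∑ j', ∑ k', ηm j j' * (ηm k k' * C i' j' k') := by
      rw [← mul_assoc, aux_expM (LinearMap.mulLeft ℂ (b i')) _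
        (fun j' => ηm j j') (fun j' => b j')]
      refine Finset.sum_congr rfl fun j' _ => ?_
      rw [aux_expR (LinearMap.mulLeft ℂ (b i') * LinearMap.mulLeft ℂ (b j'))
        (fun k' => ηm k k') (fun k' => b k'), Finset.mul_sum]
      refine Finset.sum_congr rfl fun k' _ => ?_
      rw [hC' i' j' k']
    rw [inner, Finset.mul_sum]
    refine Finset.sum_congr rfl fun j' _ => ?_
    rw [Finset.mul_sum]
    refine Finset.sum_congr rfl fun k' _ => ?_
    ring
  -- commuting operators
  have hcomm : ∀ u v : A, LinearMap.mulLeft ℂ (η u) * LinearMap.mulLeft ℂ (η v) =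
      LinearMap.mulLeft ℂ (η v) * LinearMap.mulLeft ℂ (η u) := by
    intro u v
    have h1 : η u * η v = η v * η u := central (η u) v
    calc LinearMap.mulLeft ℂ (η u) * LinearMap.mulLeft ℂ (η v)
        = LinearMap.mulLeft ℂ (η u * η v) := by
          rw [LinearMap.mulLeft_mul]; rfl
      _ = LinearMap.mulLeft ℂ (η v * η u) := by rw [h1]
      _ = LinearMap.mulLeft ℂ (η v) * LinearMap.mulLeft ℂ (η u) := by
          rw [LinearMap.mulLeft_mul]; rfl
  intro i j k
  constructor
  · rw [hNT i j k, hNT j i k, hcomm (b i) (b j)]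
  · rw [hNT i j k, hNT i k j, mul_assoc, mul_assoc, hcomm (b j) (b k)]
end
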